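/- Define Q(A) := min over a ∈ ℝ², b ∈ ℝ of ℂ [[A,a],[aᵀ,b]] : [[A,a],[aᵀ,b]] for symmetric 2×2 matrices A, where ℂ is a symmetric positive definite fourth-order tensor. Then Q is a positive definite quadratic form on symmetric 2×2 matrices; in particular Q(A) > 0 for A ≠ 0. -/

import Mathlib

/-- The elastic energy density `ℂ E : E` of a fourth-order tensor `ℂ` applied to a 3×3 matrix. -/
def en (C : Fin 3 → Fin 3 → Fin 3 → Fin 3 → ℝ) (E : Matrix (Fin 3) (Fin 3) ℝ) : ℝ :=
  ∑ i : Fin 3, ∑ j : Fin 3, ∑ k : Fin 3, ∑ l : Fin 3, C i j k l * E i j * E k l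

/-- The symmetric 3×3 block matrix `[[A, a], [aᵀ, b]]`. -/
def blk (A : Matrix (Fin 2) (Fin 2) ℝ) (a : Fin 2 → ℝ) (b : ℝ) :
    Matrix (Fin 3) (Fin 3) ℝ :=
  Matrix.of fun i j =>
    if hi : (i : ℕ) < 2 then
      if hj : (j : ℕ) < 2 then A ⟨i, hi⟩ ⟨j, hj⟩ else a ⟨i, hi⟩
    else if hj : (j : ℕ) < 2 then a ⟨j, hj⟩ else b

def bil (C : Fin 3 → Fin 3 → Fin 3 → Fin 3 → ℝ) (E F : Matrix (Fin 3) (Fin 3) ℝ) : ℝ :=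
  ∑ i : Fin 3, ∑ j : Fin 3, ∑ k : Fin 3, ∑ l : Fin 3, C i j k l * E i j * F k l

lemma en_eq_bil (C) (E) : en C E = bil C E E := rfl

lemma en_add (C) (E F) : en C (E + F) = en C E + (bil C E F + bil C F E) + en C F := by
  simp only [en, bil, Matrix.add_apply, ← Finset.sum_add_distrib]
  exact Finset.sum_congr rfl fun i _ => Finset.sum_congr rfl fun j _ =>
    Finset.sum_congr rfl fun k _ => Finset.sum_congr rfl fun l _ => by ring

lemma bil_add_left (C) (E F G) : bil C (E + F) G = bil C E G + bil C F G := by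
  simp only [bil, Matrix.add_apply, ← Finset.sum_add_distrib]
  exact Finset.sum_congr rfl fun i _ => Finset.sum_congr rfl fun j _ =>
    Finset.sum_congr rfl fun k _ => Finset.sum_congr rfl fun l _ => by ring

lemma bil_add_right (C) (E F G) : bil C E (F + G) = bil C E F + bil C E G := by
  simp only [bil, Matrix.add_apply, ← Finset.sum_add_distrib]
  exact Finset.sum_congr rfl fun i _ => Finset.sum_congr rfl fun j _ =>
    Finset.sum_congr rfl fun k _ => Finset.sum_congr rfl fun l _ => by ring

lemma bil_smul_left (C) (c : ℝ) (E F) : bil C (c • E) F = c * bil C E F := by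
  simp only [bil, Matrix.smul_apply, smul_eq_mul, Finset.mul_sum]
  exact Finset.sum_congr rfl fun i _ => Finset.sum_congr rfl fun j _ =>
    Finset.sum_congr rfl fun k _ => Finset.sum_congr rfl fun l _ => by ring

lemma bil_smul_right (C) (c : ℝ) (E F) : bil C E (c • F) = c * bil C E F := by
  simp only [bil, Matrix.smul_apply, smul_eq_mul, Finset.mul_sum]
  exact Finset.sum_congr rfl fun i _ => Finset.sum_congr rfl fun j _ =>
    Finset.sum_congr rfl fun k _ => Finset.sum_congr rfl fun l _ => by ring

lemma en_zero (C) : en C 0 = 0 := by simp [en]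

lemma blk_add (A A' a a' b b') : blk A a b + blk A' a' b' = blk (A + A') (a + a') (b + b') := by
  ext i j
  simp only [blk, Matrix.add_apply, Matrix.of_apply]
  split_ifs <;> simp

lemma blk_zero : blk 0 0 0 = 0 := by
  ext i j
  simp only [blk, Matrix.of_apply, Matrix.zero_apply]
  split_ifs <;> simp

lemma blk_isSymm (A : Matrix (Fin 2) (Fin 2) ℝ) (hA : A.IsSymm) (a b) : (blk A a b).IsSymm := by
  rw [Matrix.IsSymm]
  ext i j
  simp only [blk, Matrix.transpose_apply, Matrix.of_apply]
  split_ifs <;> first | rfl | exact hA.apply _ _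

lemma blk_app_lt (A : Matrix (Fin 2) (Fin 2) ℝ) (a b) (i j : Fin 2) :
    blk A a b ⟨i, by omega⟩ ⟨j, by omega⟩ = A i j := by
  have hi : ((⟨(i : ℕ), by omega⟩ : Fin 3) : ℕ) < 2 := i.isLt
  have hj : ((⟨(j : ℕ), by omega⟩ : Fin 3) : ℕ) < 2 := j.isLt
  simp only [blk, Matrix.of_apply, dif_pos hi, dif_pos hj]

lemma blk_app_col (A : Matrix (Fin 2) (Fin 2) ℝ) (a b) (i : Fin 2) :
    blk A a b ⟨i, by omega⟩ 2 = a i := by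
  simp [blk, Matrix.of_apply]
  intro h
  exact absurd h (by have := i.isLt; omega)

lemma blk_app_corner (A : Matrix (Fin 2) (Fin 2) ℝ) (a b) :
    blk A a b 2 2 = b := by
  simp [blk]

lemma blk0_ne_zero (a : Fin 2 → ℝ) (b : ℝ) (h : ¬(a = 0 ∧ b = 0)) : blk 0 a b ≠ 0 := by
  intro h0
  apply h
  constructor
  · funext i
    have := congrFun (congrFun h0 ⟨i, by omega⟩) 2
    rwa [blk_app_col] at this
  · have := congrFun (congrFun h0 2) 2
    rwa [blk_app_corner] at this

/-- The linear parametrization of the off-diagonal data. -/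
def Lm (x : (Fin 2 → ℝ) × ℝ) : Matrix (Fin 3) (Fin 3) ℝ := blk 0 x.1 x.2

lemma Lm_add (x y : (Fin 2 → ℝ) × ℝ) : Lm (x + y) = Lm x + Lm y := by
  rw [Lm, Lm, Lm, blk_add, add_zero]; rw [Prod.fst_add, Prod.snd_add]

lemma Lm_smul (c : ℝ) (x : (Fin 2 → ℝ) × ℝ) : Lm (c • x) = c • Lm x := by
  rw [Lm, Lm]
  ext i j
  simp only [blk, Matrix.smul_apply, Matrix.of_apply]
  split_ifs <;> simp [Prod.smul_fst, Prod.smul_snd]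

lemma Lm_zero : Lm 0 = 0 := blk_zero

/-- The cross-term linear map `x ↦ (y ↦ bil C (Lm x) (Lm y) + bil C (Lm y) (Lm x))`. -/
def phi (C : Fin 3 → Fin 3 → Fin 3 → Fin 3 → ℝ) :
    ((Fin 2 → ℝ) × ℝ) →ₗ[ℝ] Module.Dual ℝ ((Fin 2 → ℝ) × ℝ) where
  toFun x :=
    { toFun := fun y => bil C (Lm x) (Lm y) + bil C (Lm y) (Lm x)
      map_add' := fun y z => by simp only [Lm_add, bil_add_left, bil_add_right]; ring
      map_smul' := fun c y => by
        simp only [Lm_smul, bil_smul_left, bil_smul_right, RingHom.id_apply, smul_eq_mul]; ring }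
  map_add' x y := by
    refine LinearMap.ext fun z => ?_
    simp only [Lm_add, bil_add_left, bil_add_right, LinearMap.coe_mk, AddHom.coe_mk,
      LinearMap.add_apply]
    ring
  map_smul' c x := by
    refine LinearMap.ext fun z => ?_
    simp only [Lm_smul, bil_smul_left, bil_smul_right, LinearMap.coe_mk, AddHom.coe_mk,
      RingHom.id_apply, LinearMap.smul_apply, smul_eq_mul]
    ring

/-- The affine cross term with the fixed block `blk A 0 0`. -/
def psi (C : Fin 3 → Fin 3 → Fin 3 → Fin 3 → ℝ) (A : Matrix (Fin 2) (Fin 2) ℝ) :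
    Module.Dual ℝ ((Fin 2 → ℝ) × ℝ) where
  toFun y := bil C (blk A 0 0) (Lm y) + bil C (Lm y) (blk A 0 0)
  map_add' y z := by simp only [Lm_add, bil_add_left, bil_add_right]; ring
  map_smul' c y := by
    simp only [Lm_smul, bil_smul_left, bil_smul_right, RingHom.id_apply, smul_eq_mul]; ring

/-- `Q(A) := min_{a,b} ℂ[[A,a],[aᵀ,b]] : [[A,a],[aᵀ,b]]` is well defined (the minimum
is attained) and is a positive definite quadratic form on symmetric 2×2 matrices:
`Q(A) > 0` for symmetric `A ≠ 0`. -/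
theorem stmt_3 (C : Fin 3 → Fin 3 → Fin 3 → Fin 3 → ℝ)
    (hsym : ∀ i j k l, C i j k l = C k l i j)
    (hpos : ∀ E : Matrix (Fin 3) (Fin 3) ℝ, E.IsSymm → E ≠ 0 → 0 < en C E)
    (A : Matrix (Fin 2) (Fin 2) ℝ) (hA : A.IsSymm) (hA0 : A ≠ 0) :
    (∃ q : ℝ, IsLeast {q : ℝ | ∃ (a : Fin 2 → ℝ) (b : ℝ), q = en C (blk A a b)} q) ∧
    (∀ q : ℝ, IsLeast {q : ℝ | ∃ (a : Fin 2 → ℝ) (b : ℝ), q = en C (blk A a b)} q →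
      0 < q) := by
  classical
  have hQ : ∀ x : (Fin 2 → ℝ) × ℝ, x ≠ 0 → 0 < en C (Lm x) := by
    intro x hx
    refine hpos _ (blk_isSymm 0 (by simp [Matrix.IsSymm]) _ _) ?_
    refine blk0_ne_zero _ _ fun ⟨h1, h2⟩ => hx ?_
    exact Prod.ext h1 h2
  have hQ' : ∀ x : (Fin 2 → ℝ) × ℝ, 0 ≤ en C (Lm x) := by
    intro x
    by_cases hx : x = 0
    · simp [hx, Lm_zero, en_zero]
    · exact le_of_lt (hQ x hx)
  have hinj : Function.Injective (phi C) := by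
    rw [← LinearMap.ker_eq_bot, LinearMap.ker_eq_bot']
    intro x hx
    by_contra hx0
    have h1 : phi C x x = 0 := by rw [hx]; rfl
    have h2 : phi C x x = 2 * en C (Lm x) := by
      simp only [phi, LinearMap.coe_mk, AddHom.coe_mk, en_eq_bil]; ring
    have := hQ x hx0
    rw [h1] at h2
    linarith
  have hsurj : Function.Surjective (phi C) := by
    have hdim : Module.finrank ℝ ((Fin 2 → ℝ) × ℝ) =
        Module.finrank ℝ (Module.Dual ℝ ((Fin 2 → ℝ) × ℝ)) := (Subspace.dual_finrank_eq).symm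
    exact (LinearMap.injective_iff_surjective_of_finrank_eq_finrank hdim).mp hinj
  obtain ⟨x, hx⟩ := hsurj (-(psi C A))
  set q := en C (blk A x.1 x.2) with hq
  have key : ∀ (a : Fin 2 → ℝ) (b : ℝ), q ≤ en C (blk A a b) := by
    intro a b
    set y : (Fin 2 → ℝ) × ℝ := (a - x.1, b - x.2) with hy
    have hdecomp : blk A a b = blk A x.1 x.2 + Lm y := by
      rw [Lm, blk_add]
      congr 1 <;> simp [hy]
    have hEx : blk A x.1 x.2 = blk A 0 0 + Lm x := by
      rw [Lm, blk_add]; simp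
    have hcross : bil C (blk A x.1 x.2) (Lm y) + bil C (Lm y) (blk A x.1 x.2) = 0 := by
      have h1 : phi C x y = -(psi C A y) := by rw [hx]; rfl
      simp only [phi, psi, LinearMap.coe_mk, AddHom.coe_mk] at h1
      rw [hEx, bil_add_left, bil_add_right]
      linarith
    rw [hdecomp, en_add, hcross]
    have := hQ' y
    linarith
  refine ⟨⟨q, ⟨x.1, x.2, rfl⟩, fun r ⟨a, b, hr⟩ => hr ▸ key a b⟩, ?_⟩
  rintro r ⟨⟨a, b, hr⟩, -⟩
  rw [hr]
  refine hpos _ (blk_isSymm A hA a b) ?_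
  intro h0
  apply hA0
  ext i j
  have := congrFun (congrFun h0 ⟨i, by omega⟩) ⟨j, by omega⟩
  rwa [blk_app_lt] at this
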